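/- Suppose A = (MT)⁻¹ S_M where S_M is Hermitian positive definite and MT is Hermitian invertible. Then A is diagonalizable over ℝ: there exists a basis of ℂⁿ of eigenvectors of A, all eigenvalues of A are real, and the eigenvectors {v_k} can be normalized so that v_k† (M T) v_l = ±δ_{kl}, with the sign equal to the sign of the corresponding eigenvalue. -/

import Mathlib

open Matrix
open scoped ComplexOrder

/-- if `S_M` is Hermitian positive definite and `M T` is Hermitian
invertible (`M` a Hermitian involution commuting with the Hermitian positive
definite `T`), then `A = (M T)⁻¹ S_M` is diagonalizable with real eigenvalues:
there is a linearly independent family of `n` eigenvectors `v_k` (hence a basis of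
`ℂⁿ`), with nonzero real eigenvalues `Ω_k`, normalized so that
`v_k† (M T) v_l = sign(Ω_k) δ_{kl}`. -/
theorem ftqrpa_diagonalizable {n : Type*} [Fintype n] [DecidableEq n]
    (SM M T : Matrix n n ℂ)
    (hSM : SM.PosDef)
    (hM : M.IsHermitian) (hM2 : M * M = 1)
    (hT : T.PosDef) (hMT : M * T = T * M)
    (A : Matrix n n ℂ) (hA : A = (M * T)⁻¹ * SM) :
    ∃ (v : n → (n → ℂ)) (Ω : n → ℝ),
      LinearIndependent ℂ v ∧
      (∀ k, Ω k ≠ 0) ∧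
      (∀ k, A *ᵥ v k = (Ω k : ℂ) • v k) ∧
      (∀ k l, star (v k) ⬝ᵥ ((M * T) *ᵥ v l) =
        if k = l then (Real.sign (Ω k) : ℂ) else 0) := by
  set B := M * T with hBdef
  -- B is Hermitian
  have hBH : B.IsHermitian := by
    show Bᴴ = B
    rw [hBdef, conjTranspose_mul, hT.isHermitian.eq, hM.eq, ← hMT]
  -- B is a unit
  have hMunit : IsUnit M := ⟨⟨M, M, hM2, hM2⟩, rfl⟩
  have hBunit : IsUnit B := hMunit.mul hT.isUnit
  have hBdet : IsUnit B.det := (isUnit_iff_isUnit_det B).mp hBunit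
  -- square root R of SM
  open scoped MatrixOrder in set R := CFC.sqrt SM with hRdef
  have hRS : R * R = SM := by
    open scoped MatrixOrder in exact CFC.sqrt_mul_sqrt_self SM hSM.posSemidef.nonneg
  have hRpsd : R.PosSemidef := by
    open scoped MatrixOrder in exact (CFC.sqrt_nonneg SM).posSemidef
  have hRH : R.IsHermitian := hRpsd.isHermitian
  have hRdet : IsUnit R.det := by
    have h : R.det * R.det = SM.det := by rw [← det_mul, hRS]
    have hSd : SM.det ≠ 0 := hSM.det_pos.ne'
    exact (mul_self_ne_zero.mp (h ▸ hSd)).isUnit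
  have hRunit : IsUnit R := (isUnit_iff_isUnit_det R).mpr hRdet
  have hRR : R * R⁻¹ = 1 := mul_nonsing_inv R hRdet
  have hRR' : R⁻¹ * R = 1 := nonsing_inv_mul R hRdet
  -- C := R * B⁻¹ * R
  set C := R * B⁻¹ * R with hCdef
  have hBinvH : B⁻¹.IsHermitian := hBH.inv
  have hCH : C.IsHermitian := by
    show Cᴴ = C
    rw [hCdef, conjTranspose_mul, conjTranspose_mul, hRH.eq, hBinvH.eq, mul_assoc]
  have hBinvunit : IsUnit B⁻¹ := (isUnit_nonsing_inv_iff).mpr hBunit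
  have hCunit : IsUnit C := (hRunit.mul hBinvunit).mul hRunit
  have hCdet : IsUnit C.det := (isUnit_iff_isUnit_det C).mp hCunit
  have hCinv : C⁻¹ = R⁻¹ * (B * R⁻¹) := by
    rw [hCdef, Matrix.mul_inv_rev, Matrix.mul_inv_rev, nonsing_inv_nonsing_inv B hBdet,
      mul_assoc]
  -- eigendata of C
  set μ := hCH.eigenvalues with hμdef
  set u : n → (n → ℂ) := fun j => ⇑(hCH.eigenvectorBasis j) with hudef
  have hCu : ∀ j, C *ᵥ u j = (μ j : ℂ) • u j := by
    intro j
    have := hCH.mulVec_eigenvectorBasis j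
    rw [hudef, this]
    funext i
    simp [Complex.real_smul, hμdef]
  have hune : ∀ j, u j ≠ 0 := by
    intro j hj
    have := hCH.eigenvectorBasis.orthonormal.ne_zero j
    apply this
    ext i
    exact congrFun hj i
  have hμne : ∀ j, μ j ≠ 0 := by
    intro j hj
    apply hune j
    have h0 : C *ᵥ u j = 0 := by rw [hCu j, hj]; simp
    have hinj := (mulVec_injective_iff_isUnit.mpr hCunit)
    have : C *ᵥ u j = C *ᵥ 0 := by rw [h0]; simp
    exact hinj this
  have hCinvu : ∀ j, C⁻¹ *ᵥ u j = ((μ j : ℂ))⁻¹ • u j := by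
    intro j
    have h1 : C⁻¹ *ᵥ (C *ᵥ u j) = u j := by
      rw [mulVec_mulVec, nonsing_inv_mul C hCdet, one_mulVec]
    rw [hCu j, mulVec_smul] at h1
    have hμc : (μ j : ℂ) ≠ 0 := Complex.ofReal_ne_zero.mpr (hμne j)
    calc C⁻¹ *ᵥ u j = ((μ j : ℂ))⁻¹ • ((μ j : ℂ) • (C⁻¹ *ᵥ u j)) := by
          rw [smul_smul, inv_mul_cancel₀ hμc, one_smul]
      _ = ((μ j : ℂ))⁻¹ • u j := by rw [h1]
  -- orthonormality
  have hortho : ∀ k l, star (u k) ⬝ᵥ u l = if k = l then 1 else 0 := by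
    intro k l
    have := orthonormal_iff_ite.mp hCH.eigenvectorBasis.orthonormal k l
    rw [← this]
    exact (dotProduct_comm _ _).trans (EuclideanSpace.inner_eq_star_dotProduct _ _).symm
  -- the eigenvectors
  set w : n → (n → ℂ) := fun k => R⁻¹ *ᵥ u k with hwdef
  set c : n → ℝ := fun k => Real.sqrt |μ k| with hcdef
  have hcpos : ∀ k, 0 < c k := fun k =>
    Real.sqrt_pos.mpr (abs_pos.mpr (hμne k))
  set v : n → (n → ℂ) := fun k => (c k : ℂ) • w k with hvdef
  -- normalization
  have hnorm : ∀ k l, star (v k) ⬝ᵥ (B *ᵥ v l) =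
      if k = l then (Real.sign (μ k) : ℂ) else 0 := by
    intro k l
    have hwBw : star (w k) ⬝ᵥ (B *ᵥ w l) =
        ((μ l : ℂ))⁻¹ * (if k = l then 1 else 0) := by
      have hRinvH : (R⁻¹)ᴴ = R⁻¹ := hRH.inv
      calc star (w k) ⬝ᵥ (B *ᵥ w l)
          = star (R⁻¹ *ᵥ u k) ⬝ᵥ ((B * R⁻¹) *ᵥ u l) := by rw [hwdef, mulVec_mulVec]
        _ = (star (u k) ᵥ* (R⁻¹)ᴴ) ⬝ᵥ ((B * R⁻¹) *ᵥ u l) := by rw [star_mulVec]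
        _ = star (u k) ⬝ᵥ ((R⁻¹ * (B * R⁻¹)) *ᵥ u l) := by
            rw [hRinvH, ← dotProduct_mulVec, mulVec_mulVec]
        _ = star (u k) ⬝ᵥ (C⁻¹ *ᵥ u l) := by rw [← hCinv]
        _ = ((μ l : ℂ))⁻¹ * (star (u k) ⬝ᵥ u l) := by
            rw [hCinvu l, dotProduct_smul, smul_eq_mul]
        _ = ((μ l : ℂ))⁻¹ * (if k = l then 1 else 0) := by rw [hortho]
    have hvBv : star (v k) ⬝ᵥ (B *ᵥ v l)
        = (c k : ℂ) * (c l : ℂ) * (((μ l : ℂ))⁻¹ * (if k = l then 1 else 0)) := by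
      rw [hvdef]
      simp only [star_smul, mulVec_smul, smul_dotProduct, dotProduct_smul, smul_eq_mul,
        star_trivial, RCLike.star_def, Complex.conj_ofReal]
      rw [hwBw]
      ring
    rw [hvBv]
    by_cases hkl : k = l
    · subst hkl
      rw [if_pos (rfl : k = k), if_pos (rfl : k = k), mul_one]
      have hsq : (c k : ℝ) * c k = |μ k| := Real.mul_self_sqrt (abs_nonneg _)
      have hcc : (c k : ℂ) * (c k : ℂ) = ((|μ k| : ℝ) : ℂ) := by
        rw [← Complex.ofReal_mul, hsq]
      have hre : |μ k| * (μ k)⁻¹ = Real.sign (μ k) := by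
        rcases lt_trichotomy (μ k) 0 with h | h | h
        · rw [abs_of_neg h, Real.sign_of_neg h, neg_mul, mul_inv_cancel₀ (hμne k)]
        · exact absurd h (hμne k)
        · rw [abs_of_pos h, Real.sign_of_pos h, mul_inv_cancel₀ (hμne k)]
      rw [hcc, ← Complex.ofReal_inv, ← Complex.ofReal_mul, hre]
    · simp [hkl]
  -- eigenvector equation
  have heig : ∀ k, A *ᵥ v k = (μ k : ℂ) • v k := by
    intro k
    have hAw : A *ᵥ w k = (μ k : ℂ) • w k := by
      have hkey : A * R⁻¹ = R⁻¹ * C := by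
        rw [hA, ← hRS, hCdef]
        calc B⁻¹ * (R * R) * R⁻¹ = B⁻¹ * R * (R * R⁻¹) := by
              simp only [Matrix.mul_assoc]
          _ = B⁻¹ * R := by rw [hRR, mul_one]
          _ = (R⁻¹ * R) * (B⁻¹ * R) := by rw [hRR', one_mul]
          _ = R⁻¹ * (R * B⁻¹ * R) := by simp only [Matrix.mul_assoc]
      calc A *ᵥ w k = (A * R⁻¹) *ᵥ u k := by rw [hwdef, mulVec_mulVec]
        _ = (R⁻¹ * C) *ᵥ u k := by rw [hkey]
        _ = R⁻¹ *ᵥ (C *ᵥ u k) := by rw [← mulVec_mulVec]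
        _ = R⁻¹ *ᵥ ((μ k : ℂ) • u k) := by rw [hCu k]
        _ = (μ k : ℂ) • w k := by rw [mulVec_smul]
    rw [hvdef]
    simp only [mulVec_smul, hAw, smul_smul]
    rw [mul_comm]
  -- linear independence from the normalization
  have hsignne : ∀ k, (Real.sign (μ k) : ℂ) ≠ 0 := by
    intro k
    simp only [ne_eq, Complex.ofReal_eq_zero]
    exact fun h => hμne k (Real.sign_eq_zero_iff.mp h)
  have hLI : LinearIndependent ℂ v := by
    rw [Fintype.linearIndependent_iff]
    intro g hg l
    let φ : (n → ℂ) →ₗ[ℂ] ℂ :=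
      { toFun := fun x => star (v l) ⬝ᵥ (B *ᵥ x)
        map_add' := fun x y => by simp only [mulVec_add, dotProduct_add]
        map_smul' := fun a x => by
          simp only [mulVec_smul, dotProduct_smul, smul_eq_mul, RingHom.id_apply] }
    have h0 : φ (∑ i, g i • v i) = 0 := by rw [hg]; exact map_zero φ
    rw [map_sum φ (fun i => g i • v i) Finset.univ] at h0
    have h0' : ∑ i, g i * (if l = i then (Real.sign (μ l) : ℂ) else 0) = 0 := by
      calc ∑ i, g i * (if l = i then (Real.sign (μ l) : ℂ) else 0)
          = ∑ i, φ (g i • v i) := by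
            refine Finset.sum_congr rfl fun i _ => ?_
            rw [_root_.map_smul, smul_eq_mul]
            congr 1
            exact (hnorm l i).symm
        _ = 0 := h0
    simp only [mul_ite, mul_zero] at h0'
    rw [Finset.sum_ite_eq (Finset.univ : Finset n) l
      (fun i => g i * (Real.sign (μ l) : ℂ))] at h0'
    simp only [Finset.mem_univ, if_pos] at h0'
    exact (mul_eq_zero.mp h0').resolve_right (hsignne l)
  exact ⟨v, μ, hLI, hμne, heig, hnorm⟩
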